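/- A permutation class C is well quasi-ordered if and only if the set of its members that are both sum indecomposable and skew indecomposable is well quasi-ordered. -/

import Mathlib

open Filter

/-- A permutation of some finite length `n`. -/
abbrev Permu : Type := Σ n : ℕ, Equiv.Perm (Fin n)

/-- `PLe σ π` : the permutation `σ` is contained in `π` as a pattern. -/
def PLe (σ π : Permu) : Prop :=
  ∃ f : Fin σ.1 → Fin π.1, StrictMono f ∧
    ∀ i j : Fin σ.1, σ.2 i < σ.2 j ↔ π.2 (f i) < π.2 (f j)

/-- A permutation class: a set of permutations closed downward under containment. -/
def IsPermClass (C : Set Permu) : Prop :=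
  ∀ σ π : Permu, PLe σ π → π ∈ C → σ ∈ C

/-- The number of permutations of length `n` in `C`. -/
noncomputable def pcount (C : Set Permu) (n : ℕ) : ℕ :=
  Set.ncard {π ∈ C | π.1 = n}

/-- The upper growth rate of a class, as an extended real. -/
noncomputable def ugr (C : Set Permu) : EReal :=
  limsup (fun n : ℕ => (((pcount C n : ℝ) ^ ((n : ℝ)⁻¹) : ℝ) : EReal)) atTop

/-- The lower growth rate of a class, as an extended real. -/
noncomputable def lgr (C : Set Permu) : EReal :=
  liminf (fun n : ℕ => (((pcount C n : ℝ) ^ ((n : ℝ)⁻¹) : ℝ) : EReal)) atTop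
/-- The direct sum of two permutations, on underlying finite types. -/
def permSum {m n : ℕ} (π : Equiv.Perm (Fin m)) (σ : Equiv.Perm (Fin n)) :
    Equiv.Perm (Fin (m + n)) :=
  finSumFinEquiv.symm.trans ((Equiv.sumCongr π σ).trans finSumFinEquiv)

/-- The sum `π ⊕ σ` of two permutations. -/
def psum (π σ : Permu) : Permu := ⟨π.1 + σ.1, permSum π.2 σ.2⟩

/-- The skew sum of two permutations, on underlying finite types. -/
def permSkew {m n : ℕ} (π : Equiv.Perm (Fin m)) (σ : Equiv.Perm (Fin n)) :
    Equiv.Perm (Fin (m + n)) :=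
  finSumFinEquiv.symm.trans ((Equiv.sumCongr π σ).trans
    (((Equiv.sumComm (Fin m) (Fin n)).trans finSumFinEquiv).trans (finCongr (Nat.add_comm n m))))

/-- The skew sum `π ⊖ σ` of two permutations. -/
def pskew (π σ : Permu) : Permu := ⟨π.1 + σ.1, permSkew π.2 σ.2⟩

/-- A set of permutations is sum closed if it is closed under `⊕`. -/
def SumClosed (C : Set Permu) : Prop := ∀ π σ : Permu, π ∈ C → σ ∈ C → psum π σ ∈ C

/-- A set of permutations is skew closed if it is closed under `⊖`. -/
def SkewClosed (C : Set Permu) : Prop := ∀ π σ : Permu, π ∈ C → σ ∈ C → pskew π σ ∈ C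

/-- A permutation is sum indecomposable if it is not the sum of two nonempty permutations. -/
def SumIndec (τ : Permu) : Prop := ¬ ∃ π σ : Permu, 0 < π.1 ∧ 0 < σ.1 ∧ τ = psum π σ

/-- A permutation is skew indecomposable if it is not the skew sum of two nonempty
permutations. -/
def SkewIndec (τ : Permu) : Prop := ¬ ∃ π σ : Permu, 0 < π.1 ∧ 0 < σ.1 ∧ τ = pskew π σ

/-- `Sub π` : the class of all permutations contained in `π`. -/
def SubCl (π : Permu) : Set Permu := {σ | PLe σ π}

/-- The sum closure of a set of permutations: the smallest sum closed class containing it. -/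
def sumClosure (C : Set Permu) : Set Permu :=
  ⋂₀ {D : Set Permu | IsPermClass D ∧ SumClosed D ∧ C ⊆ D}

/-- The skew closure of a set of permutations: the smallest skew closed class containing it. -/
def skewClosure (C : Set Permu) : Set Permu :=
  ⋂₀ {D : Set Permu | IsPermClass D ∧ SkewClosed D ∧ C ⊆ D}

/-- The cell class `G_γ`: permutations `π` with `gr(⊕Sub(π)) < γ` or `gr(⊖Sub(π)) < γ`.
(These growth rates exist, so they coincide with the upper growth rates used here.) -/
noncomputable def cellClass (γ : ℝ) : Set Permu :=
  {π | ugr (sumClosure (SubCl π)) < (γ : EReal) ∨ ugr (skewClosure (SubCl π)) < (γ : EReal)}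
/-- A set of permutations is well quasi-ordered if it contains no infinite antichain
under the containment order. -/
def Wqo (S : Set Permu) : Prop :=
  ¬ ∃ f : ℕ → Permu, (∀ n, f n ∈ S) ∧ ∀ i j : ℕ, i ≠ j → ¬ PLe (f i) (f j)
-- AUX START
section Aux

lemma PLe.refl (π : Permu) : PLe π π :=
  ⟨id, strictMono_id, fun _ _ => Iff.rfl⟩

lemma PLe.trans {a b c : Permu} (h1 : PLe a b) (h2 : PLe b c) : PLe a c := by
  obtain ⟨f, hf, hf2⟩ := h1
  obtain ⟨g, hg, hg2⟩ := h2
  exact ⟨g ∘ f, hg.comp hf, fun i j => (hf2 i j).trans (hg2 (f i) (f j))⟩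

instance : IsRefl Permu PLe := ⟨PLe.refl⟩
instance : IsTrans Permu PLe := ⟨fun _ _ _ => PLe.trans⟩
instance : IsPreorder Permu PLe where
  refl := PLe.refl
  trans := fun _ _ _ => PLe.trans

lemma PLe.length_le {σ π : Permu} (h : PLe σ π) : σ.1 ≤ π.1 := by
  obtain ⟨f, hf, -⟩ := h
  simpa using Fintype.card_le_of_injective f hf.injective

lemma fin_strictMono_le_apply {n : ℕ} {f : Fin n → Fin n} (hf : StrictMono f) :
    ∀ x : Fin n, x.val ≤ (f x).val := by
  have le1 : ∀ (k : ℕ) (x : Fin n), x.val = k → k ≤ (f x).val := by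
    intro k
    induction k with
    | zero => intro x _; exact Nat.zero_le _
    | succ k ih =>
      intro x hx
      have hk : k < n := by omega
      have hlt : (⟨k, hk⟩ : Fin n) < x := by simp [Fin.lt_def, hx]
      have := Fin.lt_def.mp (hf hlt)
      have hk2 := ih ⟨k, hk⟩ rfl
      omega
  exact fun x => le1 x.val x rfl

lemma strictMono_fin_self_eq_id {n : ℕ} {f : Fin n → Fin n} (hf : StrictMono f) : f = id := by
  have hsurj : Function.Surjective f := Finite.injective_iff_surjective.mp hf.injective
  set g : Fin n → Fin n := Function.surjInv hsurj with hg
  have hfg : ∀ y, f (g y) = y := fun y => Function.surjInv_eq hsurj y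
  have hgmono : StrictMono g := by
    intro a b hab
    have : f (g a) < f (g b) := by rw [hfg, hfg]; exact hab
    exact hf.lt_iff_lt.mp this
  funext x
  have h1 := fin_strictMono_le_apply hf x
  have h2 := fin_strictMono_le_apply hgmono (f x)
  have h3 : f (g (f x)) = f x := hfg (f x)
  have h4 : g (f x) = x := hf.injective h3
  rw [h4] at h2
  exact Fin.ext (le_antisymm h2 h1)

lemma PLe.eq_of_length_eq {σ π : Permu} (h : PLe σ π) (hlen : σ.1 = π.1) : σ = π := by
  obtain ⟨n, s⟩ := σ
  obtain ⟨m, p⟩ := π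
  simp only at hlen
  subst hlen
  obtain ⟨f, hf, hiff⟩ := h
  simp only at f hf hiff
  have : f = id := strictMono_fin_self_eq_id hf
  subst this
  simp only [id] at hiff
  -- show s = p
  have key : p ∘ s.symm = id := by
    apply strictMono_fin_self_eq_id
    intro a b hab
    have := (hiff (s.symm a) (s.symm b)).mp (by simpa using hab)
    simpa using this
  have : ∀ x, p x = s x := by
    intro x
    have := congrFun key (s x)
    simpa using this
  congr 1
  exact Equiv.ext fun x => (this x).symm

end Aux
section Aux2

lemma permSum_castAdd_val {m n : ℕ} (π : Equiv.Perm (Fin m)) (σ : Equiv.Perm (Fin n))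
    (i : Fin m) : (permSum π σ (Fin.castAdd n i)).val = (π i).val := by
  simp [permSum]

lemma permSum_natAdd_val {m n : ℕ} (π : Equiv.Perm (Fin m)) (σ : Equiv.Perm (Fin n))
    (j : Fin n) : (permSum π σ (Fin.natAdd m j)).val = m + (σ j).val := by
  simp [permSum]

lemma permSkew_castAdd_val {m n : ℕ} (π : Equiv.Perm (Fin m)) (σ : Equiv.Perm (Fin n))
    (i : Fin m) : (permSkew π σ (Fin.castAdd n i)).val = n + (π i).val := by
  simp [permSkew]; omega

lemma permSkew_natAdd_val {m n : ℕ} (π : Equiv.Perm (Fin m)) (σ : Equiv.Perm (Fin n))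
    (j : Fin n) : (permSkew π σ (Fin.natAdd m j)).val = (σ j).val := by
  simp [permSkew]

lemma PLe_psum_left (u v : Permu) : PLe u (psum u v) := by
  refine ⟨Fin.castAdd v.1, Fin.strictMono_castAdd _, fun i j => ?_⟩
  show _ ↔ permSum u.2 v.2 _ < permSum u.2 v.2 _
  rw [Fin.lt_def, Fin.lt_def, permSum_castAdd_val, permSum_castAdd_val]

lemma PLe_psum_right (u v : Permu) : PLe v (psum u v) := by
  refine ⟨Fin.natAdd u.1, Fin.strictMono_natAdd _, fun i j => ?_⟩
  show _ ↔ permSum u.2 v.2 _ < permSum u.2 v.2 _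
  rw [Fin.lt_def, Fin.lt_def, permSum_natAdd_val, permSum_natAdd_val]
  omega

lemma PLe_pskew_left (u v : Permu) : PLe u (pskew u v) := by
  refine ⟨Fin.castAdd v.1, Fin.strictMono_castAdd _, fun i j => ?_⟩
  show _ ↔ permSkew u.2 v.2 _ < permSkew u.2 v.2 _
  rw [Fin.lt_def, Fin.lt_def, permSkew_castAdd_val, permSkew_castAdd_val]
  omega

lemma PLe_pskew_right (u v : Permu) : PLe v (pskew u v) := by
  refine ⟨Fin.natAdd u.1, Fin.strictMono_natAdd _, fun i j => ?_⟩
  show _ ↔ permSkew u.2 v.2 _ < permSkew u.2 v.2 _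
  rw [Fin.lt_def, Fin.lt_def, permSkew_natAdd_val, permSkew_natAdd_val]

lemma psum_mono {u v u' v' : Permu} (hu : PLe u u') (hv : PLe v v') :
    PLe (psum u v) (psum u' v') := by
  obtain ⟨f, hf, hfc⟩ := hu
  obtain ⟨g, hg, hgc⟩ := hv
  refine ⟨fun i => Fin.addCases (motive := fun _ => Fin (u'.1 + v'.1))
      (fun i => Fin.castAdd v'.1 (f i)) (fun j => Fin.natAdd u'.1 (g j)) i, ?_, ?_⟩
  · intro i j hij
    rw [Fin.lt_def] at hij
    refine Fin.lt_def.mpr ?_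
    induction i using Fin.addCases with
    | left i =>
      induction j using Fin.addCases with
      | left j =>
        have hij' : i < j := by rw [Fin.lt_def]; simpa using hij
        have h2 := Fin.lt_def.mp (hf hij')
        simpa using h2
      | right j =>
        have h1 := (f i).isLt
        simp only [Fin.addCases_left, Fin.addCases_right, Fin.coe_castAdd, Fin.coe_natAdd]
        omega
    | right i =>
      induction j using Fin.addCases with
      | left j =>
        have h1 := (j : Fin u.1).isLt
        simp only [Fin.coe_castAdd, Fin.coe_natAdd] at hij
        omega
      | right j =>
        have hij' : i < j := by
          rw [Fin.lt_def]
          simp only [Fin.coe_natAdd] at hij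
          omega
        have h2 := Fin.lt_def.mp (hg hij')
        simp only [Fin.addCases_right, Fin.coe_natAdd]
        omega
  · intro i j
    show permSum u.2 v.2 i < permSum u.2 v.2 j ↔
      permSum u'.2 v'.2 _ < permSum u'.2 v'.2 _
    rw [Fin.lt_def, Fin.lt_def]
    induction i using Fin.addCases with
    | left i =>
      induction j using Fin.addCases with
      | left j =>
        have h := Iff.trans (Fin.lt_def.symm.trans (hfc i j)) Fin.lt_def
        simp only [Fin.addCases_left, permSum_castAdd_val] at h ⊢
        exact h
      | right j =>
        have h1 := (u.2 i).isLt
        have h2 := (u'.2 (f i)).isLt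
        simp only [Fin.addCases_left, Fin.addCases_right, permSum_castAdd_val, permSum_natAdd_val]
        omega
    | right i =>
      induction j using Fin.addCases with
      | left j =>
        have h1 := (u.2 j).isLt
        have h2 := (u'.2 (f j)).isLt
        simp only [Fin.addCases_left, Fin.addCases_right, permSum_castAdd_val, permSum_natAdd_val]
        omega
      | right j =>
        have h := Iff.trans (Fin.lt_def.symm.trans (hgc i j)) Fin.lt_def
        simp only [Fin.addCases_right, permSum_natAdd_val]
        omega

lemma pskew_mono {u v u' v' : Permu} (hu : PLe u u') (hv : PLe v v') :
    PLe (pskew u v) (pskew u' v') := by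
  obtain ⟨f, hf, hfc⟩ := hu
  obtain ⟨g, hg, hgc⟩ := hv
  refine ⟨fun i => Fin.addCases (motive := fun _ => Fin (u'.1 + v'.1))
      (fun i => Fin.castAdd v'.1 (f i)) (fun j => Fin.natAdd u'.1 (g j)) i, ?_, ?_⟩
  · intro i j hij
    rw [Fin.lt_def] at hij
    refine Fin.lt_def.mpr ?_
    induction i using Fin.addCases with
    | left i =>
      induction j using Fin.addCases with
      | left j =>
        have hij' : i < j := by rw [Fin.lt_def]; simpa using hij
        have h2 := Fin.lt_def.mp (hf hij')
        simpa using h2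
      | right j =>
        have h1 := (f i).isLt
        simp only [Fin.addCases_left, Fin.addCases_right, Fin.coe_castAdd, Fin.coe_natAdd]
        omega
    | right i =>
      induction j using Fin.addCases with
      | left j =>
        have h1 := (j : Fin u.1).isLt
        simp only [Fin.coe_castAdd, Fin.coe_natAdd] at hij
        omega
      | right j =>
        have hij' : i < j := by
          rw [Fin.lt_def]
          simp only [Fin.coe_natAdd] at hij
          omega
        have h2 := Fin.lt_def.mp (hg hij')
        simp only [Fin.addCases_right, Fin.coe_natAdd]
        omega
  · intro i j
    show permSkew u.2 v.2 i < permSkew u.2 v.2 j ↔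
      permSkew u'.2 v'.2 _ < permSkew u'.2 v'.2 _
    rw [Fin.lt_def, Fin.lt_def]
    induction i using Fin.addCases with
    | left i =>
      induction j using Fin.addCases with
      | left j =>
        have h := Iff.trans (Fin.lt_def.symm.trans (hfc i j)) Fin.lt_def
        simp only [Fin.addCases_left, permSkew_castAdd_val] at h ⊢
        omega
      | right j =>
        have h1 := (v.2 j).isLt
        have h2 := (v'.2 (g j)).isLt
        simp only [Fin.addCases_left, Fin.addCases_right, permSkew_castAdd_val,
          permSkew_natAdd_val]
        omega
    | right i =>
      induction j using Fin.addCases with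
      | left j =>
        have h1 := (v.2 i).isLt
        have h2 := (v'.2 (g i)).isLt
        simp only [Fin.addCases_left, Fin.addCases_right, permSkew_castAdd_val,
          permSkew_natAdd_val]
        omega
      | right j =>
        have h := Iff.trans (Fin.lt_def.symm.trans (hgc i j)) Fin.lt_def
        simp only [Fin.addCases_right, permSkew_natAdd_val]
        omega

end Aux2
section Ramsey

lemma ramsey_pairs (c : ℕ → ℕ → Bool) :
    ∃ (g : ℕ → ℕ) (b : Bool), StrictMono g ∧ ∀ i j, i < j → c (g i) (g j) = b := by
  classical
  have step : ∀ X : Set ℕ, X.Infinite →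
      ∃ b : Bool, {x ∈ X | sInf X < x ∧ c (sInf X) x = b}.Infinite := by
    intro X hX
    by_contra hcon
    push_neg at hcon
    have h1 : {x ∈ X | sInf X < x} ⊆
        {x ∈ X | sInf X < x ∧ c (sInf X) x = true} ∪
        {x ∈ X | sInf X < x ∧ c (sInf X) x = false} := by
      intro x hx
      rcases Bool.eq_false_or_eq_true (c (sInf X) x) with h | h
      · exact Or.inl ⟨hx.1, hx.2, h⟩
      · exact Or.inr ⟨hx.1, hx.2, h⟩

    have h2 : {x ∈ X | sInf X < x}.Finite := ((hcon true).union (hcon false)).subset h1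
    have h3 : X ⊆ {x ∈ X | sInf X < x} ∪ Set.Iic (sInf X) := by
      intro x hx
      by_cases h : sInf X < x
      · left; exact ⟨hx, h⟩
      · right; exact not_lt.mp h
    exact hX ((h2.union (Set.finite_Iic _)).subset h3)
  let F : ℕ → {X : Set ℕ // X.Infinite} := fun n =>
    Nat.rec ⟨Set.univ, Set.infinite_univ⟩
      (fun _ Y => ⟨{x ∈ Y.1 | sInf Y.1 < x ∧ c (sInf Y.1) x = Classical.choose (step Y.1 Y.2)},
        Classical.choose_spec (step Y.1 Y.2)⟩) n
  set a : ℕ → ℕ := fun n => sInf (F n).1 with ha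
  set bs : ℕ → Bool := fun n => Classical.choose (step (F n).1 (F n).2) with hbs
  have hFsucc : ∀ n, (F (n + 1)).1 = {x ∈ (F n).1 | a n < x ∧ c (a n) x = bs n} := fun n => rfl
  have hmem : ∀ n, a n ∈ (F n).1 := fun n => Nat.sInf_mem (F n).2.nonempty
  have hchain : ∀ m n : ℕ, m ≤ n → (F n).1 ⊆ (F m).1 := by
    intro m n hmn
    induction n with
    | zero => simp_all
    | succ n ih =>
      rcases Nat.lt_or_ge m (n + 1) with h | h
      · intro x hx
        rw [hFsucc n] at hx
        exact ih (by omega) hx.1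
      · have : m = n + 1 := by omega
        subst this; exact fun x hx => hx
  have hamono : StrictMono a := by
    apply strictMono_nat_of_lt_succ
    intro n
    have := hmem (n + 1)
    rw [hFsucc n] at this
    exact this.2.1
  have hkey : ∀ m n : ℕ, m < n → c (a m) (a n) = bs m := by
    intro m n hmn
    have : a n ∈ (F (m + 1)).1 := hchain (m + 1) n hmn (hmem n)
    rw [hFsucc m] at this
    exact this.2.2
  have hpig : ∃ β : Bool, {m | bs m = β}.Infinite := by
    by_contra hcon
    push_neg at hcon
    have : (Set.univ : Set ℕ) ⊆ {m | bs m = true} ∪ {m | bs m = false} := by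
      intro m _
      rcases Bool.eq_false_or_eq_true (bs m) with h | h
      · exact Or.inl h
      · exact Or.inr h
    exact Set.infinite_univ (((hcon true).union (hcon false)).subset this)
  obtain ⟨β, hβ⟩ := hpig
  refine ⟨a ∘ Nat.nth (fun m => bs m = β), β, hamono.comp (Nat.nth_strictMono hβ), ?_⟩
  intro i j hij
  have h1 : Nat.nth (fun m => bs m = β) i < Nat.nth (fun m => bs m = β) j :=
    Nat.nth_strictMono hβ hij
  have h2 : bs (Nat.nth (fun m => bs m = β) i) = β := Nat.nth_mem_of_infinite hβ i
  simpa [h2] using hkey _ _ h1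

end Ramsey

section Bridge

lemma not_strictAnti_nat (s : ℕ → ℕ) (h : ∀ n, s (n + 1) < s n) : False := by
  have key : ∀ n, s n + n ≤ s 0 := by
    intro n
    induction n with
    | zero => omega
    | succ n ih => have := h n; omega
  have := key (s 0 + 1)
  omega

lemma wqo_iff_pwo (S : Set Permu) : Wqo S ↔ S.PartiallyWellOrderedOn PLe := by
  classical
  constructor
  · intro hw; rw [Set.partiallyWellOrderedOn_iff_exists_lt]; intro f hfmem
    by_contra hnot
    push_neg at hnot
    have hbad : ∀ m n : ℕ, m < n → ¬ PLe (f m) (f n) := fun m n h => hnot m n h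
    obtain ⟨g, β, hg, hcol⟩ := ramsey_pairs (fun i j => decide (PLe (f j) (f i)))
    cases β with
    | true =>
      have hdec : ∀ n, PLe (f (g (n + 1))) (f (g n)) := by
        intro n
        have := hcol n (n + 1) (Nat.lt_succ_self n)
        exact of_decide_eq_true this
      apply not_strictAnti_nat (fun n => (f (g n)).1)
      intro n
      have hle := (hdec n).length_le
      rcases lt_or_eq_of_le hle with h | h
      · exact h
      · exfalso
        have heq := (hdec n).eq_of_length_eq h
        exact hbad (g n) (g (n + 1)) (hg (Nat.lt_succ_self n)) (heq ▸ PLe.refl _)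
    | false =>
      apply hw
      refine ⟨f ∘ g, fun n => hfmem (g n), fun i j hij => ?_⟩
      rcases Nat.lt_or_ge i j with h | h
      · exact hbad (g i) (g j) (hg h)
      · have hji : j < i := by omega
        have := hcol j i hji
        simp only [Function.comp_apply]
        exact of_decide_eq_false this
  · intro hp ⟨f, hfmem, hanti⟩
    obtain ⟨m, n, hmn, hr⟩ := hp.exists_lt hfmem
    exact hanti m n (Nat.ne_of_lt hmn) hr

end Bridge
/-- A permutation class is well quasi-ordered if and only if its set of
members that are both sum and skew indecomposable is well quasi-ordered. -/
theorem wqo_iff_sum_skew_indecomposables_wqo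
    (C : Set Permu) (hC : IsPermClass C) :
    Wqo C ↔ Wqo {π ∈ C | SumIndec π ∧ SkewIndec π} := by
  classical
  constructor
  · rintro h ⟨f, hmem, hanti⟩
    exact h ⟨f, fun n => (hmem n).1, hanti⟩
  · intro hB
    rw [wqo_iff_pwo] at hB ⊢
    rw [Set.PartiallyWellOrderedOn.iff_not_exists_isMinBadSeq (fun π : Permu => π.1)]
    rintro ⟨f, ⟨hfmem, hfbad⟩, hmin⟩
    -- the set of proper "pieces" of terms of the minimal bad sequence
    set T : Set Permu := {σ | ∃ n, PLe σ (f n) ∧ σ.1 < (f n).1} with hT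
    have hTC : T ⊆ C := by
      rintro σ ⟨n, h1, -⟩
      exact hC σ (f n) h1 (hfmem n)
    have hTpwo : T.PartiallyWellOrderedOn PLe := by
      rw [Set.PartiallyWellOrderedOn.iff_forall_not_isBadSeq]
      rintro s ⟨hsmem, hsbad⟩
      simp only [hT, Set.mem_setOf_eq] at hsmem
      choose nn hn1 hn2 using hsmem
      have hne : (Set.range nn).Nonempty := ⟨nn 0, ⟨0, rfl⟩⟩
      obtain ⟨k₀, hk₀⟩ : ∃ k₀, nn k₀ = sInf (Set.range nn) := Nat.sInf_mem hne
      set M := sInf (Set.range nn) with hM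
      have hMle : ∀ k, M ≤ nn k := fun k => Nat.sInf_le ⟨k, rfl⟩
      set w : ℕ → Permu := fun i => if i < M then f i else s (k₀ + (i - M)) with hw
      refine hmin M w (fun m hm => (if_pos hm).symm) ?_ ⟨?_, ?_⟩
      · have hwM : w M = s k₀ := by simp [hw]
        rw [hwM, ← hk₀]
        exact hn2 k₀
      · intro i
        by_cases hi : i < M
        · simpa [hw, hi] using hfmem i
        · simp only [hw, if_neg hi]
          exact hTC ⟨nn _, hn1 _, hn2 _⟩
      · intro i j hij
        by_cases hj : j < M
        · have hi : i < M := hij.trans hj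
          simpa [hw, hi, hj] using hfbad i j hij
        · by_cases hi : i < M
          · simp only [hw, if_pos hi, if_neg hj]
            intro hcon
            exact hfbad i (nn (k₀ + (j - M))) (lt_of_lt_of_le hi (hMle _))
              (hcon.trans (hn1 _))
          · simp only [hw, if_neg hi, if_neg hj]
            apply hsbad
            omega
    by_cases hI : {n | f n ∈ {π ∈ C | SumIndec π ∧ SkewIndec π}}.Infinite
    · -- infinitely many terms are fully indecomposable: contradict pwo of B
      set p : ℕ → Prop := fun n => f n ∈ {π ∈ C | SumIndec π ∧ SkewIndec π} with hp
      have hI' : (setOf p).Infinite := hI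
      obtain ⟨m, n, hmn, hr⟩ := hB.exists_lt (f := fun k => f (Nat.nth p k))
        (fun k => Nat.nth_mem_of_infinite hI' k)
      exact hfbad _ _ (Nat.nth_strictMono hI' hmn) hr
    · rw [Set.not_infinite] at hI
      obtain ⟨N, hN⟩ : ∃ N, ∀ n, f n ∈ {π ∈ C | SumIndec π ∧ SkewIndec π} → n ≤ N := by
        rcases hI.bddAbove with ⟨N, hN⟩
        exact ⟨N, fun n hn => hN hn⟩
      have hdec : ∀ n, ∃ u v : Permu, N < n →
          0 < u.1 ∧ 0 < v.1 ∧ (f n = psum u v ∨ f n = pskew u v) := by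
        intro n
        by_cases hn : N < n
        · have hnB : ¬ (SumIndec (f n) ∧ SkewIndec (f n)) := by
            intro hcon
            exact absurd (hN n ⟨hfmem n, hcon⟩) (by omega)
          rcases not_and_or.mp hnB with h | h
          · rw [SumIndec, not_not] at h
            obtain ⟨u, v, hu, hv, he⟩ := h
            exact ⟨u, v, fun _ => ⟨hu, hv, Or.inl he⟩⟩
          · rw [SkewIndec, not_not] at h
            obtain ⟨u, v, hu, hv, he⟩ := h
            exact ⟨u, v, fun _ => ⟨hu, hv, Or.inr he⟩⟩
        · exact ⟨⟨0, Equiv.refl _⟩, ⟨0, Equiv.refl _⟩, fun h => absurd h hn⟩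
      choose uu vv hspec using hdec
      -- the main combinatorial step, uniform in the operation
      have main : ∀ op : Permu → Permu → Permu,
          (∀ a b a' b' : Permu, PLe a a' → PLe b b' → PLe (op a b) (op a' b')) →
          (∀ a b : Permu, PLe a (op a b)) →
          (∀ a b : Permu, PLe b (op a b)) →
          (∀ a b : Permu, (op a b).1 = a.1 + b.1) →
          ∀ P : ℕ → Prop, (setOf P).Infinite →
          (∀ n, P n → 0 < (uu n).1 ∧ 0 < (vv n).1 ∧ f n = op (uu n) (vv n)) → False := by
        intro op hmono hleft hright hlen P hPinf hPspec
        set e : ℕ → ℕ := Nat.nth P with he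
        have heP : ∀ k, P (e k) := fun k => Nat.nth_mem_of_infinite hPinf k
        have hesm : StrictMono e := Nat.nth_strictMono hPinf
        have hmemT : ∀ k, uu (e k) ∈ T ∧ vv (e k) ∈ T := by
          intro k
          obtain ⟨h1, h2, h3⟩ := hPspec (e k) (heP k)
          have hlen' : (f (e k)).1 = (uu (e k)).1 + (vv (e k)).1 := by
            rw [h3]; exact hlen _ _
          constructor
          · exact ⟨e k, by rw [h3]; exact hleft _ _, by omega⟩
          · exact ⟨e k, by rw [h3]; exact hright _ _, by omega⟩
        obtain ⟨g, hg⟩ := hTpwo.exists_monotone_subseq (f := fun k => uu (e k))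
          (fun k => (hmemT k).1)
        obtain ⟨m, n, hmn, hrv⟩ := hTpwo.exists_lt (f := fun k => vv (e (g k)))
          (fun k => (hmemT (g k)).2)
        have hru : PLe (uu (e (g m))) (uu (e (g n))) := hg m n hmn.le
        have hfin : PLe (f (e (g m))) (f (e (g n))) := by
          rw [(hPspec _ (heP (g m))).2.2, (hPspec _ (heP (g n))).2.2]
          exact hmono _ _ _ _ hru hrv
        exact hfbad _ _ (hesm (g.strictMono hmn)) hfin
      -- pigeonhole over the two operations
      set P1 : ℕ → Prop := fun n => N < n ∧ f n = psum (uu n) (vv n) with hP1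
      set P2 : ℕ → Prop := fun n => N < n ∧ f n = pskew (uu n) (vv n) with hP2
      have hcover : Set.Ioi N ⊆ setOf P1 ∪ setOf P2 := by
        intro n hn
        have hn' : N < n := hn
        obtain ⟨h1, h2, h3⟩ := hspec n hn'
        rcases h3 with h3 | h3
        · exact Or.inl ⟨hn', h3⟩
        · exact Or.inr ⟨hn', h3⟩
      have hone : (setOf P1).Infinite ∨ (setOf P2).Infinite := by
        by_contra hcon
        push_neg at hcon
        exact (Set.Ioi_infinite N) ((hcon.1.union hcon.2).subset hcover)
      rcases hone with hone | hone
      · exact main psum (fun a b a' b' => psum_mono) PLe_psum_left PLe_psum_right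
          (fun a b => rfl) P1 hone
          (fun n hn => ⟨(hspec n hn.1).1, (hspec n hn.1).2.1, hn.2⟩)
      · exact main pskew (fun a b a' b' => pskew_mono) PLe_pskew_left PLe_pskew_right
          (fun a b => rfl) P2 hone
          (fun n hn => ⟨(hspec n hn.1).1, (hspec n hn.1).2.1, hn.2⟩)
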